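/- (Corollary 2.6, homoclinic case) Assume G is conserved by X. If a differentiable curve x : ℝ → E solves the geometrically dissipated system and there exists a point x_e ∈ E with x(t) → x_e both as t → +∞ and as t → −∞, then x(t) ∈ Inv for all t ∈ ℝ and x is also a solution of the unperturbed system, i.e. x′(t) = X(x(t)) for all t ∈ ℝ. -/

import Mathlib

open scoped RealInnerProductSpace BigOperators
open Filter Topology

/-- `Σ^{(a₁,…,a_r)}_{(b₁,…,b_s)}`: the `r × s` real matrix whose `(i,j)` entry is `⟪b j, a i⟫`. -/
noncomputable def sigmaMat {E : Type*} [NormedAddCommGroup E] [InnerProductSpace ℝ E]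
    {r s : ℕ} (a : Fin r → E) (b : Fin s → E) : Matrix (Fin r) (Fin s) ℝ :=
  Matrix.of fun i j => ⟪b j, a i⟫

/-- The standard control vector `v₀(w₁,…,w_{k+1},u)`: there are `k+1` vectors `w`
(`k+1 ≥ 1` encodes the requirement that the number of `w`-vectors is at least one).
With `0`-indexing, the sign `(-1)^(i+k+1)` below is the paper's `(-1)^{i+k+1}` for
`1`-indexed `i` and `k+1` vectors. -/
noncomputable def stdControl {E : Type*} [NormedAddCommGroup E] [InnerProductSpace ℝ E]
    {k : ℕ} (w : Fin (k + 1) → E) (u : E) : E :=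
  (∑ i : Fin (k + 1),
      ((-1 : ℝ) ^ ((i : ℕ) + k + 1) *
        (sigmaMat w (Fin.snoc (w ∘ i.succAbove) u)).det) • w i) +
    (sigmaMat w w).det • u

/-- The family of gradients `(∇F₁(x),…,∇F_{k+1}(x),∇G(x))`. -/
noncomputable def gradFam {E : Type*} [NormedAddCommGroup E] [InnerProductSpace ℝ E]
    [FiniteDimensional ℝ E] {k : ℕ} (F : Fin (k + 1) → E → ℝ) (G : E → ℝ) (x : E) :
    Fin (k + 1 + 1) → E :=
  Fin.snoc (fun i => gradient (F i) x) (gradient G x)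

/-- The standard control vector field `x ↦ v₀(∇F₁(x),…,∇F_{k+1}(x),∇G(x))`. -/
noncomputable def v0Field {E : Type*} [NormedAddCommGroup E] [InnerProductSpace ℝ E]
    [FiniteDimensional ℝ E] {k : ℕ} (F : Fin (k + 1) → E → ℝ) (G : E → ℝ) (x : E) : E :=
  stdControl (fun i => gradient (F i) x) (gradient G x)

/-- `det Σ^{(∇F₁(x),…,∇F_{k+1}(x),∇G(x))}_{(∇F₁(x),…,∇F_{k+1}(x),∇G(x))}`. -/
noncomputable def gramDetFG {E : Type*} [NormedAddCommGroup E] [InnerProductSpace ℝ E]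
    [FiniteDimensional ℝ E] {k : ℕ} (F : Fin (k + 1) → E → ℝ) (G : E → ℝ) (x : E) : ℝ :=
  (sigmaMat (gradFam F G x) (gradFam F G x)).det

/-- The set `Inv = {x | det Σ^{(∇F(x),∇G(x))}_{(∇F(x),∇G(x))} = 0}`. -/
def invSet {E : Type*} [NormedAddCommGroup E] [InnerProductSpace ℝ E]
    [FiniteDimensional ℝ E] {k : ℕ} (F : Fin (k + 1) → E → ℝ) (G : E → ℝ) : Set E :=
  {x | gramDetFG F G x = 0}

/- ### Auxiliary lemmas -/

lemma snoc_comp_succAbove_castSucc {E : Type*} {k : ℕ} (w : Fin (k + 1) → E) (u : E)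
    (i : Fin (k + 1)) :
    (Fin.snoc w u : Fin (k + 2) → E) ∘ (Fin.castSucc i).succAbove
      = Fin.snoc (w ∘ i.succAbove) u := by
  funext q
  refine Fin.lastCases ?_ (fun q' => ?_) q
  · have h : (Fin.castSucc i).succAbove (Fin.last k) = Fin.last (k + 1) := by
      rw [Fin.succAbove_of_le_castSucc _ _ (by
        simpa [Fin.castSucc_le_castSucc_iff] using Fin.le_last i), Fin.succ_last]
    simp [h]
  · simp [Fin.castSucc_succAbove_castSucc]

/-- Laplace expansion identity: the inner product of any vector `y` with the standard control
vector equals the determinant of the mixed Σ-matrix. -/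
lemma inner_stdControl {E : Type*} [NormedAddCommGroup E] [InnerProductSpace ℝ E]
    {k : ℕ} (w : Fin (k + 1) → E) (u y : E) :
    ⟪y, stdControl w u⟫ = (sigmaMat (Fin.snoc w y) (Fin.snoc w u)).det := by
  rw [Matrix.det_succ_row _ (Fin.last (k + 1)), Fin.sum_univ_castSucc, stdControl,
    inner_add_right, inner_sum]
  simp only [Fin.succAbove_last]
  congr 1
  · refine Finset.sum_congr rfl fun i _ => ?_
    have hsub : (sigmaMat (Fin.snoc w y) (Fin.snoc w u)).submatrix Fin.castSucc
        (Fin.castSucc i).succAbove = sigmaMat w (Fin.snoc (w ∘ i.succAbove) u) := by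
      ext p q
      simp only [Matrix.submatrix_apply, sigmaMat, Matrix.of_apply, Fin.snoc_castSucc]
      rw [← snoc_comp_succAbove_castSucc w u i]
      rfl
    rw [real_inner_smul_right, hsub]
    simp only [sigmaMat, Matrix.of_apply, Fin.snoc_castSucc, Fin.snoc_last, Fin.coe_castSucc,
      Fin.val_last]
    rw [real_inner_comm]
    have he : (k + 1) + (i : ℕ) = (i : ℕ) + k + 1 := by omega
    rw [he]
    ring
  · have hsub : (sigmaMat (Fin.snoc w y) (Fin.snoc w u)).submatrix Fin.castSucc
        Fin.castSucc = sigmaMat w w := by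
      ext p q
      simp [Matrix.submatrix_apply, sigmaMat]
    rw [real_inner_smul_right, hsub]
    simp only [sigmaMat, Matrix.of_apply, Fin.snoc_last, Fin.val_last]
    rw [real_inner_comm]
    have he : ((-1 : ℝ)) ^ ((k + 1) + (k + 1)) = 1 := Even.neg_one_pow ⟨k + 1, by ring⟩
    rw [he]
    ring

/-- Gram determinants are nonnegative. -/
lemma gram_det_nonneg {E : Type*} [NormedAddCommGroup E] [InnerProductSpace ℝ E]
    [FiniteDimensional ℝ E] {m : ℕ} (c : Fin m → E) : 0 ≤ (sigmaMat c c).det := by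
  set b := stdOrthonormalBasis ℝ E
  set B : Matrix (Fin (Module.finrank ℝ E)) (Fin m) ℝ :=
    Matrix.of fun p q => b.repr (c q) p with hB
  have hfac : sigmaMat c c = B.conjTranspose * B := by
    ext i j
    have := b.repr.inner_map_map (c j) (c i)
    simp only [sigmaMat, Matrix.of_apply, Matrix.mul_apply, Matrix.conjTranspose_apply,
      hB, RCLike.star_def, conj_trivial]
    rw [← this, PiLp.inner_apply]
    simp [RCLike.inner_apply, conj_trivial, mul_comm]
  have hps : (B.conjTranspose * B).PosSemidef := Matrix.posSemidef_conjTranspose_mul_self B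
  rw [hfac, hps.isHermitian.det_eq_prod_eigenvalues]
  exact Finset.prod_nonneg fun i _ => by simpa using hps.eigenvalues_nonneg i

/-- The standard control vector is orthogonal to each `w j`. -/
lemma inner_w_stdControl {E : Type*} [NormedAddCommGroup E] [InnerProductSpace ℝ E]
    {k : ℕ} (w : Fin (k + 1) → E) (u : E) (j : Fin (k + 1)) :
    ⟪w j, stdControl w u⟫ = 0 := by
  rw [inner_stdControl]
  refine Matrix.det_zero_of_row_eq (i := Fin.castSucc j) (j := Fin.last (k + 1))
    (Fin.castSucc_lt_last j).ne ?_
  funext q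
  simp [sigmaMat]

/-- If the full Gram determinant vanishes, the standard control vector is zero. -/
lemma stdControl_eq_zero {E : Type*} [NormedAddCommGroup E] [InnerProductSpace ℝ E]
    {k : ℕ} (w : Fin (k + 1) → E) (u : E)
    (hD : (sigmaMat (Fin.snoc w u) (Fin.snoc w u)).det = 0) : stdControl w u = 0 := by
  have h : ⟪stdControl w u, stdControl w u⟫ = 0 := by
    nth_rewrite 1 [stdControl]
    rw [inner_add_left, sum_inner]
    have h1 : ∀ i ∈ (Finset.univ : Finset (Fin (k + 1))), ⟪(((-1 : ℝ) ^ ((i : ℕ) + k + 1) *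
        (sigmaMat w (Fin.snoc (w ∘ Fin.succAbove i) u)).det) • w i), stdControl w u⟫ = 0 := by
      intro i _
      rw [real_inner_smul_left, inner_w_stdControl]
      ring
    rw [Finset.sum_congr rfl h1, real_inner_smul_left, inner_stdControl, hD]
    simp
  exact inner_self_eq_zero.mp h

/-- Corollary 2.6, homoclinic case: a solution of the geometrically dissipated
system converging to the same point `x_e` as `t → ±∞` is contained in `Inv` and is also a
solution of the unperturbed system. -/
theorem homoclinic_solution_mem_inv_and_unperturbed
    {E : Type*} [NormedAddCommGroup E] [InnerProductSpace ℝ E]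
    [FiniteDimensional ℝ E] {k : ℕ} (F : Fin (k + 1) → E → ℝ) (G : E → ℝ) (X : E → E)
    (hF : ∀ i, ContDiff ℝ 1 (F i)) (hG : ContDiff ℝ 1 G)
    (hcons : ∀ y : E, ⟪gradient G y, X y⟫ = 0)
    (x : ℝ → E) (hx : ∀ t : ℝ, HasDerivAt x (X (x t) - v0Field F G (x t)) t)
    (x_e : E) (htop : Tendsto x atTop (𝓝 x_e)) (hbot : Tendsto x atBot (𝓝 x_e)) :
    (∀ t : ℝ, x t ∈ invSet F G) ∧ ∀ t : ℝ, HasDerivAt x (X (x t)) t := by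
  -- inner product of ∇G with v₀ equals the full Gram determinant
  have hinner : ∀ y : E, ⟪gradient G y, v0Field F G y⟫ = gramDetFG F G y := fun y => by
    rw [v0Field, inner_stdControl]; rfl
  -- derivative of G ∘ x
  have hg : ∀ t : ℝ, HasDerivAt (fun s => G (x s)) (-(gramDetFG F G (x t))) t := by
    intro t
    have hGd : HasGradientAt G (gradient G (x t)) (x t) :=
      ((hG.differentiable one_ne_zero) (x t)).hasGradientAt
    have h1 := hGd.hasFDerivAt.comp_hasDerivAt t (hx t)
    have h2 : (InnerProductSpace.toDual ℝ E (gradient G (x t)))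
        (X (x t) - v0Field F G (x t)) = -(gramDetFG F G (x t)) := by
      rw [InnerProductSpace.toDual_apply_apply, inner_sub_right, hcons, hinner]
      ring
    rw [h2] at h1
    exact h1
  -- the Gram determinant is nonnegative
  have hDnn : ∀ y : E, 0 ≤ gramDetFG F G y := fun y => gram_det_nonneg _
  -- G ∘ x is antitone
  have hant : Antitone (fun s => G (x s)) := by
    apply antitone_of_deriv_nonpos
    · exact fun t => (hg t).differentiableAt
    · intro t
      rw [(hg t).deriv]
      simpa using hDnn (x t)
  -- limits of G ∘ x at ±∞
  have htopG : Tendsto (fun s => G (x s)) atTop (𝓝 (G x_e)) :=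
    (hG.continuous.tendsto x_e).comp htop
  have hbotG : Tendsto (fun s => G (x s)) atBot (𝓝 (G x_e)) :=
    (hG.continuous.tendsto x_e).comp hbot
  -- G ∘ x is constant
  have hconst : ∀ t : ℝ, G (x t) = G x_e := by
    intro t
    have h1 : G x_e ≤ G (x t) :=
      le_of_tendsto htopG ((eventually_ge_atTop t).mono fun s hs => hant hs)
    have h2 : G (x t) ≤ G x_e :=
      ge_of_tendsto hbotG ((eventually_le_atBot t).mono fun s hs => hant hs)
    linarith
  -- hence the Gram determinant vanishes along the curve
  have hmem : ∀ t : ℝ, gramDetFG F G (x t) = 0 := by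
    intro t
    have hzero : HasDerivAt (fun s => G (x s)) 0 t := by
      have : (fun s => G (x s)) = fun _ => G x_e := funext hconst
      rw [this]
      exact hasDerivAt_const t _
    have := (hg t).unique hzero
    linarith
  -- hence v₀ vanishes along the curve
  have hv0 : ∀ t : ℝ, v0Field F G (x t) = 0 := by
    intro t
    exact stdControl_eq_zero _ _ (hmem t)
  refine ⟨fun t => hmem t, fun t => ?_⟩
  have := hx t
  rw [hv0 t, sub_zero] at this
  exact this
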